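/- At x = 1/1000, the matrices A := A_{1/1000} and B := B_{1/1000} are positive semidefinite 3×3 real matrices satisfying tr(A⁵ · B⁵) < p_{5,5}(A, B). In particular, there exist positive semidefinite 3×3 real matrices A, B such that the averaged word trace p_{5,5}(A, B) strictly exceeds the clustered trace tr(A⁵B⁵), refuting the left inequality of the refined BMV conjecture for (n, m) = (5, 5). -/

import Mathlib

set_option maxRecDepth 400000


open Matrix

/-- The matrix `A_x`. -/
def Amat (x : ℝ) : Matrix (Fin 3) (Fin 3) ℝ :=
  !![1, 0, 0; 0, x, -x; 0, -x, x]

/-- The matrix `B_x`. -/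
def Bmat (x : ℝ) : Matrix (Fin 3) (Fin 3) ℝ :=
  !![x, -x, 0; -x, x, 0; 0, 0, 1]

/-- The (finite) set `𝒲_{n,m}` of words with exactly `n` letters `A` (`true`)
and `m` letters `B` (`false`). -/
def words (n m : ℕ) : Finset (List Bool) :=
  (List.replicate n true ++ List.replicate m false).permutations.toFinset

/-- The averaged word trace `p_{5,5}(A, B)` for arbitrary 3×3 real matrices. -/
noncomputable def p55 (A B : Matrix (Fin 3) (Fin 3) ℝ) : ℝ :=
  (1 / 252) * ∑ w ∈ words 5 5, ((w.map fun b => if b = true then A else B).prod).trace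


/- Auxiliary fast integer computation -/
structure M3 where
  (a b c d e f g h i : ℤ)
deriving DecidableEq

def M3.mul (X Y : M3) : M3 :=
  ⟨X.a*Y.a+X.b*Y.d+X.c*Y.g, X.a*Y.b+X.b*Y.e+X.c*Y.h, X.a*Y.c+X.b*Y.f+X.c*Y.i,
   X.d*Y.a+X.e*Y.d+X.f*Y.g, X.d*Y.b+X.e*Y.e+X.f*Y.h, X.d*Y.c+X.e*Y.f+X.f*Y.i,
   X.g*Y.a+X.h*Y.d+X.i*Y.g, X.g*Y.b+X.h*Y.e+X.i*Y.h, X.g*Y.c+X.h*Y.f+X.i*Y.i⟩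

def M3.tr (X : M3) : ℤ := X.a + X.e + X.i

def A3 : M3 := ⟨1000,0,0, 0,1,-1, 0,-1,1⟩
def B3 : M3 := ⟨1,-1,0, -1,1,0, 0,0,1000⟩
def id3 : M3 := ⟨1,0,0, 0,1,0, 0,0,1⟩

def wp (w : List Bool) : M3 := w.foldr (fun b P => M3.mul (if b = true then A3 else B3) P) id3

def allW : Nat → List (List Bool)
  | 0 => [[]]
  | n+1 => (allW n).map (true :: ·) ++ (allW n).map (false :: ·)

def goodW : List (List Bool) := (allW 10).filter (fun w => w.count true == 5 && w.count false == 5)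

def toMat (X : M3) : Matrix (Fin 3) (Fin 3) ℤ := !![X.a,X.b,X.c; X.d,X.e,X.f; X.g,X.h,X.i]

def Aint : Matrix (Fin 3) (Fin 3) ℤ := !![1000,0,0; 0,1,-1; 0,-1,1]
def Bint : Matrix (Fin 3) (Fin 3) ℤ := !![1,-1,0; -1,1,0; 0,0,1000]

lemma toMat_mul (X Y : M3) : toMat (M3.mul X Y) = toMat X * toMat Y := by
  ext i j
  fin_cases i <;> fin_cases j <;>
    simp [toMat, M3.mul, Matrix.mul_apply, Fin.sum_univ_three]

lemma toMat_tr (X : M3) : (toMat X).trace = X.tr := by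
  simp [toMat, M3.tr, Matrix.trace, Matrix.diag, Fin.sum_univ_three]

lemma toMat_wp (w : List Bool) :
    toMat (wp w) = (w.map fun b => if b = true then Aint else Bint).prod := by
  induction w with
  | nil =>
    simp only [wp, List.foldr_nil, List.map_nil, List.prod_nil]
    ext i j; fin_cases i <;> fin_cases j <;> simp [toMat, id3, Matrix.one_apply, Matrix.vecHead, Matrix.vecTail]
  | cons b t ih =>
    simp only [wp, List.foldr_cons, List.map_cons, List.prod_cons, toMat_mul]
    rw [show (t.foldr (fun b P => M3.mul (if b = true then A3 else B3) P) id3) = wp t from rfl, ih]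
    cases b <;> rfl

lemma mem_allW {w : List Bool} {n : ℕ} : w ∈ allW n ↔ w.length = n := by
  induction n generalizing w with
  | zero => simp [allW, List.length_eq_zero_iff]
  | succ n ih =>
    simp only [allW, List.mem_append, List.mem_map]
    constructor
    · rintro (⟨t, ht, rfl⟩ | ⟨t, ht, rfl⟩) <;> simp [ih.mp ht]
    · intro h
      cases w with
      | nil => simp at h
      | cons b t =>
        cases b
        · exact Or.inr ⟨t, ih.mpr (by simpa using h), rfl⟩
        · exact Or.inl ⟨t, ih.mpr (by simpa using h), rfl⟩

lemma count_tf (w : List Bool) : w.count true + w.count false = w.length := by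
  induction w with
  | nil => simp
  | cons b t ih => cases b <;> simp [List.count_cons] <;> omega

lemma mem_words {w : List Bool} : w ∈ words 5 5 ↔ w.count true = 5 ∧ w.count false = 5 := by
  rw [words, List.mem_toFinset, List.mem_permutations, List.perm_iff_count]
  constructor
  · intro h
    refine ⟨(h true).trans (by decide), (h false).trans (by decide)⟩
  · rintro ⟨h1, h2⟩ a
    cases a
    · rw [h2]; decide
    · rw [h1]; decide

lemma words_eq : words 5 5 = goodW.toFinset := by
  ext w
  rw [mem_words, List.mem_toFinset, goodW, List.mem_filter, mem_allW]
  simp only [Bool.and_eq_true, beq_iff_eq]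
  constructor
  · rintro ⟨h1, h2⟩
    exact ⟨by rw [← count_tf, h1, h2], h1, h2⟩
  · rintro ⟨-, h⟩; exact h

lemma nodup_allW (n : ℕ) : (allW n).Nodup := by
  induction n with
  | zero => simp [allW]
  | succ n ih =>
    refine List.Nodup.append ((ih.map (by intro a b; simp)))
      ((ih.map (by intro a b; simp))) ?_
    intro x hx hy
    simp only [List.mem_map] at hx hy
    obtain ⟨t, -, rfl⟩ := hx
    obtain ⟨s, -, h⟩ := hy
    simp at h

lemma nodup_goodW : goodW.Nodup := (nodup_allW 10).filter _

/- scaling relations -/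
noncomputable def c : ℝ := 1 / 1000

lemma Amat_eq : Amat c = c • (Aint.map (Int.cast : ℤ → ℝ)) := by
  ext i j
  fin_cases i <;> fin_cases j <;>
    simp [Amat, Aint, c, Matrix.map_apply, Matrix.vecHead, Matrix.vecTail] <;> norm_num

lemma Bmat_eq : Bmat c = c • (Bint.map (Int.cast : ℤ → ℝ)) := by
  ext i j
  fin_cases i <;> fin_cases j <;>
    simp [Bmat, Bint, c, Matrix.map_apply, Matrix.vecHead, Matrix.vecTail] <;> norm_num

lemma prod_smul (l : List (Matrix (Fin 3) (Fin 3) ℝ)) :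
    (l.map (c • ·)).prod = c ^ l.length • l.prod := by
  induction l with
  | nil => simp
  | cons a t ih =>
    simp only [List.map_cons, List.prod_cons, List.length_cons, ih, pow_succ]
    rw [Matrix.smul_mul, Matrix.mul_smul, smul_smul, mul_comm]

lemma trace_map_int (M : Matrix (Fin 3) (Fin 3) ℤ) :
    (M.map (Int.cast : ℤ → ℝ)).trace = (M.trace : ℝ) := by
  simp [Matrix.trace, Matrix.diag, Matrix.map_apply, Fin.sum_univ_three]

lemma prod_map_int (l : List (Matrix (Fin 3) (Fin 3) ℤ)) :
    (l.map (Matrix.map · (Int.cast : ℤ → ℝ))).prod = l.prod.map (Int.cast : ℤ → ℝ) := by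
  have := (map_list_prod ((Int.castRingHom ℝ).mapMatrix) l).symm
  exact this

lemma trace_word (w : List Bool) :
    ((w.map fun b => if b = true then Amat c else Bmat c).prod).trace
      = c ^ w.length * ((wp w).tr : ℝ) := by
  have h1 : (w.map fun b => if b = true then Amat c else Bmat c)
      = (w.map fun b => (if b = true then Aint else Bint).map (Int.cast : ℤ → ℝ)).map (c • ·) := by
    rw [List.map_map]
    refine List.map_congr_left fun b _ => ?_
    cases b <;> simp [Amat_eq, Bmat_eq, Function.comp]
  rw [h1, prod_smul, List.length_map]
  have h2 : (w.map fun b => (if b = true then Aint else Bint).map (Int.cast : ℤ → ℝ))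
      = (w.map fun b => if b = true then Aint else Bint).map
          (Matrix.map · (Int.cast : ℤ → ℝ)) := by
    rw [List.map_map]; rfl
  rw [h2, prod_map_int, Matrix.trace_smul, ← toMat_wp, trace_map_int, toMat_tr]
  simp [smul_eq_mul]

lemma big_sum : (goodW.map (fun w => (wp w).tr)).sum = 12847356269761869762 := by decide

lemma T_val : (wp [true,true,true,true,true,false,false,false,false,false]).tr
    = 32000000000000256 := by decide

lemma sum_words :
    ∑ w ∈ words 5 5, ((w.map fun b => if b = true then Amat c else Bmat c).prod).trace
      = c ^ 10 * (12847356269761869762 : ℝ) := by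
  rw [words_eq, List.sum_toFinset _ nodup_goodW]
  have hlen : ∀ w ∈ goodW, w.length = 10 := by
    intro w hw
    exact mem_allW.mp (List.mem_of_mem_filter hw)
  have : ∀ l : List (List Bool), (∀ w ∈ l, w.length = 10) →
      (l.map fun w => ((w.map fun b => if b = true then Amat c else Bmat c).prod).trace).sum
        = c ^ 10 * ((l.map (fun w => (wp w).tr)).sum : ℝ) := by
    intro l
    induction l with
    | nil => simp
    | cons a t ih =>
      intro h
      rw [List.map_cons, List.sum_cons, ih (fun w hw => h w (List.mem_cons_of_mem _ hw)),
        trace_word, h a (List.mem_cons_self (a := a) (l := t)), List.map_cons, List.sum_cons]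
      push_cast
      ring
  rw [this goodW hlen, big_sum]
  norm_num

lemma wp_A5B5 :
    (Amat c ^ 5 * Bmat c ^ 5).trace = c ^ 10 * (32000000000000256 : ℝ) := by
  have hw : ([true,true,true,true,true,false,false,false,false,false].map
      fun b => if b = true then Amat c else Bmat c).prod = Amat c ^ 5 * Bmat c ^ 5 := by
    simp [pow_succ, mul_assoc]
  have := trace_word [true,true,true,true,true,false,false,false,false,false]
  rw [hw] at this
  rw [this, T_val]
  norm_num

lemma psd_A : (Amat c).PosSemidef := by
  rw [Matrix.posSemidef_iff_dotProduct_mulVec]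
  constructor
  · ext i j
    fin_cases i <;> fin_cases j <;> simp [Amat, Matrix.conjTranspose_apply, Matrix.vecHead, Matrix.vecTail]
  · intro x
    have : (star x) ⬝ᵥ (Amat c).mulVec x
        = x 0 * x 0 + c * ((x 1 - x 2) * (x 1 - x 2)) := by
      simp [Amat, Matrix.mulVec, dotProduct, Fin.sum_univ_three, Matrix.vecHead, Matrix.vecTail]
      ring
    rw [this]
    have hc : (0:ℝ) ≤ c := by norm_num [c]
    nlinarith [mul_self_nonneg (x 0), mul_self_nonneg (x 1 - x 2)]

lemma psd_B : (Bmat c).PosSemidef := by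
  rw [Matrix.posSemidef_iff_dotProduct_mulVec]
  constructor
  · ext i j
    fin_cases i <;> fin_cases j <;> simp [Bmat, Matrix.conjTranspose_apply, Matrix.vecHead, Matrix.vecTail]
  · intro x
    have : (star x) ⬝ᵥ (Bmat c).mulVec x
        = c * ((x 0 - x 1) * (x 0 - x 1)) + x 2 * x 2 := by
      simp [Bmat, Matrix.mulVec, dotProduct, Fin.sum_univ_three, Matrix.vecHead, Matrix.vecTail]
      ring
    rw [this]
    have hc : (0:ℝ) ≤ c := by norm_num [c]
    nlinarith [mul_self_nonneg (x 2), mul_self_nonneg (x 0 - x 1)]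

theorem stmt_15 :
    (Amat (1 / 1000)).PosSemidef ∧ (Bmat (1 / 1000)).PosSemidef ∧
      (Amat (1 / 1000) ^ 5 * Bmat (1 / 1000) ^ 5).trace <
        p55 (Amat (1 / 1000)) (Bmat (1 / 1000)) ∧
      ∃ A B : Matrix (Fin 3) (Fin 3) ℝ,
        A.PosSemidef ∧ B.PosSemidef ∧ (A ^ 5 * B ^ 5).trace < p55 A B := by
  have hc : (1 / 1000 : ℝ) = c := rfl
  have key : (Amat c ^ 5 * Bmat c ^ 5).trace < p55 (Amat c) (Bmat c) := by
    rw [p55, sum_words, wp_A5B5]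
    have hpos : (0:ℝ) < c ^ 10 := by norm_num [c]
    rw [show (1/252 : ℝ) * (c ^ 10 * 12847356269761869762)
        = c ^ 10 * (12847356269761869762 / 252) by ring]
    have : (32000000000000256 : ℝ) < 12847356269761869762 / 252 := by norm_num
    exact (mul_lt_mul_iff_right₀ hpos).mpr this
  rw [hc]
  exact ⟨psd_A, psd_B, key, Amat c, Bmat c, psd_A, psd_B, key⟩
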